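/- If m is an odd integer with m > 1, then the coefficient of x^m in (x/log(1+x))^m is 0. -/

import Mathlib

open PowerSeries

noncomputable def ell : PowerSeries ℚ := PowerSeries.mk fun i => (-1)^i / (i+1)

namespace CoeffOddAux

open Polynomial

noncomputable abbrev U : PowerSeries ℚ := 1 + PowerSeries.X
noncomputable abbrev G : PowerSeries ℚ := ell⁻¹
noncomputable abbrev L : PowerSeries ℚ := PowerSeries.X * ell
noncomputable abbrev s : PowerSeries ℚ := PowerSeries.X * (-U⁻¹)

lemma algebraMap_eq_C : (algebraMap ℚ ℚ⟦X⟧) = PowerSeries.C := rfl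

lemma constCoeff_ell : PowerSeries.constantCoeff ell = 1 := by
  simp [ell, ← coeff_zero_eq_constantCoeff_apply]

lemma constCoeff_U : PowerSeries.constantCoeff U = 1 := by simp

lemma U_mul_inv : U * U⁻¹ = 1 := PowerSeries.mul_inv_cancel _ (by simp [constCoeff_U])

lemma ell_mul_G : ell * G = 1 := PowerSeries.mul_inv_cancel _ (by simp [constCoeff_ell])

lemma constCoeff_Uinv : PowerSeries.constantCoeff U⁻¹ = 1 := by
  have := congrArg (PowerSeries.constantCoeff) U_mul_inv
  set_option linter.unnecessarySimpa false in
  simpa [constCoeff_U] using this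

lemma Uinv_ne_zero : (U⁻¹ : ℚ⟦X⟧) ≠ 0 := by
  intro h
  have := constCoeff_Uinv
  rw [h] at this
  simp at this

lemma L_ne_zero : (L : ℚ⟦X⟧) ≠ 0 := by
  intro h
  have : PowerSeries.coeff 1 L = 0 := by rw [h]; simp
  rw [show L = ell * PowerSeries.X from mul_comm _ _, coeff_succ_mul_X,
    coeff_zero_eq_constantCoeff_apply, constCoeff_ell] at this
  exact one_ne_zero this

lemma deriv_L : derivative ℚ L = U⁻¹ := by
  have h1 : (derivative ℚ L) = mk fun n => (-1)^n := by
    ext n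
    rw [PowerSeries.coeff_derivative, show L = ell * PowerSeries.X from mul_comm _ _,
      coeff_succ_mul_X, coeff_mk, ell, coeff_mk]
    have : ((n:ℚ)+1) ≠ 0 := by positivity
    field_simp
  have h2 : ((mk fun n => (-1)^n : PowerSeries ℚ)) * (1 + PowerSeries.X) = 1 := by
    ext n
    rw [mul_add, mul_one, map_add]
    cases n with
    | zero => simp
    | succ k => rw [coeff_succ_mul_X, coeff_mk, coeff_mk]; simp [pow_succ]
  rw [h1, PowerSeries.eq_inv_iff_mul_eq_one (by simp [constCoeff_U])]
  exact h2

lemma G_mul_L : G * L = PowerSeries.X := by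
  rw [show G * L = PowerSeries.X * (ell * G) by ring, ell_mul_G, mul_one]

lemma deriv_G_rel : (derivative ℚ G) * L + G * U⁻¹ = 1 := by
  have := congrArg (derivative ℚ) G_mul_L
  rw [Derivation.leibniz, PowerSeries.derivative_X, deriv_L] at this
  rw [← this]
  simp [smul_eq_mul]
  ring

lemma lemA (k : ℕ) : PowerSeries.coeff (k+1) (G^(k+2) * U⁻¹) = 0 := by
  set c : PowerSeries ℚ := PowerSeries.C ((k:ℚ)+1) with hc_def
  have hpow : derivative ℚ (G^(k+1)) = c * (G^k * derivative ℚ G) := by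
    rw [Derivation.leibniz_pow]
    have : ((k+1 : ℕ) • (G ^ (k+1-1) • derivative ℚ G)) = ((k:ℚ)+1) • (G^k * derivative ℚ G) := by
      rw [show ((k:ℚ)+1) = ((k+1 : ℕ) : ℚ) by push_cast; ring, Nat.cast_smul_eq_nsmul]
      norm_num
    rw [this, PowerSeries.smul_eq_C_mul]
  have h1 : PowerSeries.X * (G^k * derivative ℚ G) = G^(k+1) * (L * derivative ℚ G) := by
    rw [← G_mul_L]; ring
  have h2 : L * derivative ℚ G = 1 - G * U⁻¹ := by linear_combination deriv_G_rel
  have key : PowerSeries.X * derivative ℚ (G^(k+1)) = c * (G^(k+1) - G^(k+2) * U⁻¹) := by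
    rw [hpow]
    linear_combination c * h1 + c * G^(k+1) * h2
  have hc := congrArg (PowerSeries.coeff (k+1)) key
  rw [show PowerSeries.X * derivative ℚ (G^(k+1)) = derivative ℚ (G^(k+1)) * PowerSeries.X
      from mul_comm _ _,
    coeff_succ_mul_X, PowerSeries.coeff_derivative, hc_def, PowerSeries.coeff_C_mul, map_sub] at hc
  have hne : ((k:ℚ)+1) ≠ 0 := by positivity
  have h3 : ((k:ℚ)+1) * PowerSeries.coeff (k+1) (G^(k+2) * U⁻¹) = 0 := by
    linear_combination hc
  exact (mul_eq_zero.mp h3).resolve_left hne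

/-! ### The substitution homomorphism `Φ : f ↦ f(-X/(1+X))` -/

lemma coeff_s_pow {k n : ℕ} (h : n < k) : PowerSeries.coeff n (s^k) = 0 := by
  rw [mul_pow, PowerSeries.coeff_X_pow_mul', if_neg (by omega)]

lemma coeff_aeval_zero (p : ℚ[X]) (n : ℕ) (h : ∀ j ≤ n, p.coeff j = 0) :
    PowerSeries.coeff n (aeval s p) = 0 := by
  rw [aeval_def, eval₂_eq_sum, Polynomial.sum, map_sum]
  apply Finset.sum_eq_zero
  intro j hj
  rcases le_or_gt j n with hle | hlt
  · simp [h j hle]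
  · rw [algebraMap_eq_C, PowerSeries.coeff_C_mul, coeff_s_pow hlt, mul_zero]

lemma coeff_aeval_congr (p q : ℚ[X]) (n : ℕ) (h : ∀ j ≤ n, p.coeff j = q.coeff j) :
    PowerSeries.coeff n (aeval s p) = PowerSeries.coeff n (aeval s q) := by
  have := coeff_aeval_zero (p - q) n (by intro j hj; simp [h j hj])
  rw [map_sub, map_sub] at this
  linarith

noncomputable def Phi (f : PowerSeries ℚ) : PowerSeries ℚ :=
  PowerSeries.mk fun n => PowerSeries.coeff n (aeval s (trunc (n+1) f))

lemma coeff_Phi (f : PowerSeries ℚ) (n N : ℕ) (h : n < N) :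
    PowerSeries.coeff n (Phi f) = PowerSeries.coeff n (aeval s (trunc N f)) := by
  rw [Phi, coeff_mk]
  apply coeff_aeval_congr
  intro j hj
  rw [coeff_trunc, coeff_trunc, if_pos (by omega), if_pos (by omega)]

lemma Phi_coe (p : ℚ[X]) : Phi (p : PowerSeries ℚ) = aeval s p := by
  ext n
  rw [coeff_Phi _ n (n+1) (by omega)]
  apply coeff_aeval_congr
  intro j hj
  rw [coeff_trunc, if_pos (by omega), Polynomial.coeff_coe]

lemma Phi_mul (f g : PowerSeries ℚ) : Phi (f * g) = Phi f * Phi g := by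
  ext n
  rw [coeff_Phi _ n (n+1) (by omega), PowerSeries.coeff_mul]
  have : ∀ p ∈ Finset.HasAntidiagonal.antidiagonal n, PowerSeries.coeff p.1 (Phi f) * PowerSeries.coeff p.2 (Phi g)
      = PowerSeries.coeff p.1 (aeval s (trunc (n+1) f)) *
        PowerSeries.coeff p.2 (aeval s (trunc (n+1) g)) := by
    intro p hp
    have hp' := Finset.HasAntidiagonal.antidiagonal.fst_le hp
    have hp'' := Finset.HasAntidiagonal.antidiagonal.snd_le hp
    rw [coeff_Phi _ _ (n+1) (by omega), coeff_Phi _ _ (n+1) (by omega)]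
  rw [Finset.sum_congr rfl this, ← PowerSeries.coeff_mul, ← map_mul]
  apply coeff_aeval_congr
  intro j hj
  rw [coeff_trunc, if_pos (by omega), Polynomial.coeff_mul, PowerSeries.coeff_mul]
  apply Finset.sum_congr rfl
  intro q hq
  have h1 := Finset.HasAntidiagonal.antidiagonal.fst_le hq
  have h2 := Finset.HasAntidiagonal.antidiagonal.snd_le hq
  rw [coeff_trunc, if_pos (by omega), coeff_trunc, if_pos (by omega)]

lemma Phi_add (f g : PowerSeries ℚ) : Phi (f + g) = Phi f + Phi g := by
  ext n
  rw [map_add, coeff_Phi _ n (n+1) (by omega), coeff_Phi f n (n+1) (by omega),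
    coeff_Phi g n (n+1) (by omega), map_add, map_add, map_add]

lemma Phi_one : Phi 1 = 1 := by
  have := Phi_coe 1
  rwa [Polynomial.coe_one, map_one] at this

lemma Phi_X : Phi PowerSeries.X = s := by
  have : ((Polynomial.X : ℚ[X]) : PowerSeries ℚ) = PowerSeries.X := by
    simp [Polynomial.coe_X]
  rw [← this, Phi_coe, aeval_X]

lemma Phi_pow (f : PowerSeries ℚ) (k : ℕ) : Phi (f^k) = (Phi f)^k := by
  induction k with
  | zero => simpa using Phi_one
  | succ j ih => rw [pow_succ, Phi_mul, ih, pow_succ]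

lemma Phi_deriv (f : PowerSeries ℚ) :
    derivative ℚ (Phi f) = Phi (derivative ℚ f) * derivative ℚ s := by
  ext n
  rw [PowerSeries.coeff_derivative, coeff_Phi f (n+1) (n+2) (by omega),
    ← PowerSeries.coeff_derivative, Derivation.map_aeval, smul_eq_mul,
    PowerSeries.coeff_mul, PowerSeries.coeff_mul]
  apply Finset.sum_congr rfl
  intro q hq
  have h1 := Finset.HasAntidiagonal.antidiagonal.fst_le hq
  rw [coeff_Phi _ _ (n+1) (by omega), trunc_derivative]

lemma constCoeff_Phi (f : PowerSeries ℚ) :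
    PowerSeries.constantCoeff (Phi f) = PowerSeries.constantCoeff f := by
  rw [← coeff_zero_eq_constantCoeff_apply, ← coeff_zero_eq_constantCoeff_apply,
    coeff_Phi f 0 1 (by omega)]
  rw [show trunc 1 f = Polynomial.C (PowerSeries.coeff 0 f) from ?_]
  · simp
  · ext j
    rw [coeff_trunc]
    rcases Nat.eq_zero_or_pos j with rfl | hj
    · simp
    · rw [if_neg (by omega), Polynomial.coeff_C, if_neg (by omega)]

lemma deriv_s : derivative ℚ s = -(U⁻¹^2) := by
  rw [Derivation.leibniz, PowerSeries.derivative_X, smul_eq_mul, smul_eq_mul, map_neg,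
    derivative_inv']
  have hdU : derivative ℚ U = 1 := by
    rw [show (U : ℚ⟦X⟧) = 1 + PowerSeries.X from rfl, map_add, PowerSeries.derivative_X]
    simp
  rw [hdU]
  linear_combination U⁻¹ * U_mul_inv

lemma Phi_U : Phi U = U⁻¹ := by
  rw [show (U : ℚ⟦X⟧) = 1 + PowerSeries.X from rfl, Phi_add, Phi_one, Phi_X]
  linear_combination -U_mul_inv

lemma Phi_Uinv : Phi U⁻¹ = U := by
  have h1 : Phi U * Phi U⁻¹ = 1 := by rw [← Phi_mul, U_mul_inv, Phi_one]
  rw [Phi_U] at h1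
  have h2 : U⁻¹ * U = 1 := by rw [mul_comm]; exact U_mul_inv
  exact mul_left_cancel₀ Uinv_ne_zero (h1.trans h2.symm)

lemma Phi_L : Phi L = -L := by
  apply derivative.ext
  · rw [Phi_deriv, deriv_L, deriv_s, Phi_Uinv, map_neg, deriv_L]
    linear_combination -U⁻¹ * U_mul_inv
  · rw [constCoeff_Phi, map_neg]
    have : PowerSeries.constantCoeff L = 0 := by
      rw [show (L : ℚ⟦X⟧) = PowerSeries.X * ell from rfl, map_mul]
      simp
    rw [this]
    simp

lemma Phi_G : Phi G = G * U⁻¹ := by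
  have h1 : Phi G * Phi L = s := by rw [← Phi_mul, G_mul_L, Phi_X]
  rw [Phi_L] at h1
  have h2 : L * Phi G = L * (G * U⁻¹) := by
    have : Phi G * L = PowerSeries.X * U⁻¹ := by linear_combination -h1
    rw [mul_comm L (Phi G), this, ← G_mul_L]
    ring
  exact mul_left_cancel₀ L_ne_zero h2

/-! ### Key residue lemma -/

lemma coeff_U_pow_zero {r n : ℕ} (h : r < n) : PowerSeries.coeff n (U^r) = 0 := by
  have hU : (U : ℚ⟦X⟧) = ((1 + Polynomial.X : ℚ[X]) : ℚ⟦X⟧) := by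
    rw [Polynomial.coe_add, Polynomial.coe_one, Polynomial.coe_X]
  rw [hU, ← Polynomial.coe_pow, Polynomial.coeff_coe]
  apply Polynomial.coeff_eq_zero_of_natDegree_lt
  calc ((1 + Polynomial.X : ℚ[X])^r).natDegree ≤ r * (1 + Polynomial.X : ℚ[X]).natDegree :=
        Polynomial.natDegree_pow_le
    _ ≤ r * 1 := by
        apply Nat.mul_le_mul_left
        apply Polynomial.natDegree_add_le_of_degree_le <;> simp
    _ < n := by omega

lemma Uinv_pow_mul_U_pow {j k : ℕ} (h : j ≤ k) : (U⁻¹ : ℚ⟦X⟧)^j * U^k = U^(k-j) := by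
  have : (U : ℚ⟦X⟧)^k = U^(k-j) * U^j := by rw [← pow_add]; congr 1; omega
  rw [this, show (U⁻¹ : ℚ⟦X⟧)^j * (U^(k-j) * U^j) = U^(k-j) * (U⁻¹ * U)^j by rw [mul_pow]; ring,
    mul_comm U⁻¹ U, U_mul_inv, one_pow, mul_one]

lemma lemP (k : ℕ) (p : ℚ[X]) :
    PowerSeries.coeff (k+1) (aeval s p * U^k) = (-1)^(k+1) * p.coeff (k+1) := by
  induction p using Polynomial.induction_on' with
  | add p q hp hq => rw [map_add, add_mul, map_add, hp, hq, Polynomial.coeff_add]; ring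
  | monomial j a =>
    rw [aeval_monomial, algebraMap_eq_C, Polynomial.coeff_monomial]
    have hs : (s : ℚ⟦X⟧)^j = (-1)^j * (PowerSeries.X^j * (U⁻¹)^j) := by
      rw [mul_pow, neg_pow]
      ring
    rw [mul_assoc, PowerSeries.coeff_C_mul, hs]
    have hneg : ∀ j : ℕ, ((-1 : ℚ⟦X⟧))^j = PowerSeries.C ((-1 : ℚ)^j) := by
      intro j
      rw [map_pow, map_neg, map_one]
    rcases lt_trichotomy j (k+1) with hj | hj | hj
    · rw [if_neg (by omega)]
      have heq : (-1:ℚ⟦X⟧)^j * (PowerSeries.X^j * U⁻¹^j) * U^k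
          = PowerSeries.C ((-1 : ℚ)^j) * (PowerSeries.X^j * U^(k-j)) := by
        rw [← hneg, ← Uinv_pow_mul_U_pow (show j ≤ k by omega)]
        ring
      rw [heq, PowerSeries.coeff_C_mul, PowerSeries.coeff_X_pow_mul', if_pos (by omega),
        coeff_U_pow_zero (by omega)]
      ring
    · subst hj
      rw [if_pos rfl]
      have heq : (-1:ℚ⟦X⟧)^(k+1) * (PowerSeries.X^(k+1) * U⁻¹^(k+1)) * U^k
          = PowerSeries.C ((-1 : ℚ)^(k+1)) * (PowerSeries.X^(k+1) * (U⁻¹^(k+1) * U^k)) := by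
        rw [← hneg]
        ring
      rw [heq, PowerSeries.coeff_C_mul, PowerSeries.coeff_X_pow_mul', if_pos (by omega)]
      have h0 : PowerSeries.coeff (k+1-(k+1)) ((U⁻¹ : ℚ⟦X⟧)^(k+1) * U^k) = 1 := by
        rw [Nat.sub_self, coeff_zero_eq_constantCoeff_apply, map_mul, map_pow, map_pow,
          constCoeff_Uinv, constCoeff_U]
        simp
      rw [h0]
      ring
    · rw [if_neg (by omega)]
      have heq : (-1:ℚ⟦X⟧)^j * (PowerSeries.X^j * U⁻¹^j) * U^k
          = PowerSeries.X^j * ((-1:ℚ⟦X⟧)^j * U⁻¹^j * U^k) := by ring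
      rw [heq, PowerSeries.coeff_X_pow_mul', if_neg (by omega)]
      ring

lemma lemR (k : ℕ) (f : ℚ⟦X⟧) :
    PowerSeries.coeff (k+1) f = (-1)^(k+1) * PowerSeries.coeff (k+1) (Phi f * U^k) := by
  set p := trunc (k+2) f with hp
  have hdvd : (PowerSeries.X : ℚ⟦X⟧)^(k+2) ∣ (f - ↑p) := by
    rw [PowerSeries.X_pow_dvd_iff]
    intro j hj
    rw [map_sub, Polynomial.coeff_coe, hp, coeff_trunc, if_pos hj, sub_self]
  obtain ⟨g, hg⟩ := hdvd
  have hf : f = (p : ℚ⟦X⟧) + PowerSeries.X^(k+2) * g := by linear_combination hg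
  have hL : PowerSeries.coeff (k+1) f = p.coeff (k+1) := by
    rw [hf, map_add, PowerSeries.coeff_X_pow_mul', if_neg (by omega), add_zero,
      Polynomial.coeff_coe]
  have hPhi : Phi f = aeval s p + s^(k+2) * Phi g := by
    rw [hf, Phi_add, Phi_coe, Phi_mul, Phi_pow, Phi_X]
  have hR : PowerSeries.coeff (k+1) (Phi f * U^k) = (-1)^(k+1) * p.coeff (k+1) := by
    rw [hPhi, add_mul, map_add, lemP]
    have h2 : (s : ℚ⟦X⟧)^(k+2) * Phi g * U^k
        = PowerSeries.X^(k+2) * ((-U⁻¹)^(k+2) * Phi g * U^k) := by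
      rw [mul_pow]
      ring
    rw [h2, PowerSeries.coeff_X_pow_mul', if_neg (by omega), add_zero]
  rw [hL, hR]
  have : ((-1:ℚ))^(k+1) * ((-1:ℚ))^(k+1) = 1 := by
    rw [← pow_add]
    exact Even.neg_one_pow ⟨k+1, by ring⟩
  calc p.coeff (k+1) = ((-1:ℚ))^(k+1) * ((-1:ℚ))^(k+1) * p.coeff (k+1) := by rw [this, one_mul]
    _ = (-1)^(k+1) * ((-1)^(k+1) * p.coeff (k+1)) := by ring

end CoeffOddAux

open CoeffOddAux in
theorem coeff_odd_zero (m : ℕ) (hodd : Odd m) (hm : 1 < m) :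
    PowerSeries.coeff m (ell⁻¹ ^ m) = 0 := by
  obtain ⟨k, rfl⟩ : ∃ k, m = k + 2 := ⟨m - 2, by omega⟩
  have hA : PowerSeries.coeff (k+1) (G^(k+2) * U⁻¹) = 0 := lemA k
  have hsplit : PowerSeries.coeff (k+2) (G^(k+2))
      = PowerSeries.coeff (k+2) (G^(k+2) * U⁻¹) := by
    have h1 : (G^(k+2) : ℚ⟦X⟧) = G^(k+2)*U⁻¹ + (G^(k+2)*U⁻¹) * PowerSeries.X := by
      linear_combination (-(G^(k+2) : ℚ⟦X⟧)) * U_mul_inv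
    rw [h1, map_add, coeff_succ_mul_X, ← h1, hA, add_zero]
  have hPhi : Phi (G^(k+2)) = G^(k+2) * U⁻¹^(k+2) := by
    rw [Phi_pow, Phi_G, mul_pow]
  have hU2 : (G^(k+2) : ℚ⟦X⟧) * U⁻¹^(k+2) * U^(k+1) = G^(k+2) * U⁻¹ := by
    have h3 : (U⁻¹ : ℚ⟦X⟧)^(k+1) * U^(k+1) = 1 := by
      rw [Uinv_pow_mul_U_pow (le_refl (k+1)), Nat.sub_self, pow_zero]
    calc (G^(k+2) : ℚ⟦X⟧) * U⁻¹^(k+2) * U^(k+1)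
        = G^(k+2) * U⁻¹ * (U⁻¹^(k+1) * U^(k+1)) := by ring
      _ = G^(k+2) * U⁻¹ := by rw [h3, mul_one]
  have hR := lemR (k+1) (G^(k+2))
  rw [hPhi, hU2] at hR
  have hsign : ((-1:ℚ))^(k+1+1) = -1 := Odd.neg_one_pow (show Odd (k+2) from hodd)
  rw [hsign] at hR
  show PowerSeries.coeff (k+2) (G^(k+2)) = 0
  have hR' : PowerSeries.coeff (k+2) (G^(k+2))
      = -1 * PowerSeries.coeff (k+2) (G^(k+2) * U⁻¹) := hR
  linarith [hsplit, hR']
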